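/- Let n > 5 be an integer. Then OCN(L_n) ≤ 4(n-1)(n-2), where L_n is the n-ladder graph. -/

import Mathlib

noncomputable section

/-- A rectilinear drawing of a finite simple graph `G`: an injective map of the
vertices to points of the plane `ℝ × ℝ` in general position (no three collinear);
each edge is drawn as the straight-line segment between the images of its endpoints. -/
structure OrchardDrawing {V : Type*} (G : SimpleGraph V) where
  pos : V → ℝ × ℝ
  inj : Function.Injective pos
  genPos : ∀ u v w : V, u ≠ v → u ≠ w → v ≠ w →
    ¬ Collinear ℝ ({pos u, pos v, pos w} : Set (ℝ × ℝ))

/-- The number of Orchard crossings of a drawing: the number of pairs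
`(e, e')` where `e = {s,t}` is an edge of `G` and `e' = {u,v}` is an unordered pair of
distinct vertices with `{u,v} ≠ {s,t}` such that the straight line through the images of
`u` and `v` meets the open segment joining the images of `s` and `t`.
This equals `Σ_{(s,t) ∈ E} c(s,t)`. -/
def orchardCrossings {V : Type*} {G : SimpleGraph V} (D : OrchardDrawing G) : ℕ :=
  Nat.card {q : Sym2 V × Sym2 V //
    q.1 ∈ G.edgeSet ∧ q.2 ≠ q.1 ∧ ¬ q.2.IsDiag ∧
    ∃ u v s t : V, q.2 = s(u, v) ∧ q.1 = s(s, t) ∧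
      ∃ p ∈ openSegment ℝ (D.pos s) (D.pos t),
        Collinear ℝ ({D.pos u, D.pos v, p} : Set (ℝ × ℝ))}

/-- The Orchard crossing number of a finite simple graph: the minimum of the number of
Orchard crossings over all rectilinear drawings. -/
def OCN {V : Type*} [Fintype V] (G : SimpleGraph V) : ℕ :=
  sInf {m : ℕ | ∃ D : OrchardDrawing G, orchardCrossings D = m}

/-- The `n`-ladder graph: vertices `(i, k)` with `i : Fin n`, `k : Fin 2`;
edges are the two paths `(i, k)–(i+1, k)` (for `k = 0, 1` and `i = 0, …, n-2`)
together with the rungs `(i, 0)–(i, 1)`. -/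
def ladderGraph (n : ℕ) : SimpleGraph (Fin n × Fin 2) :=
  SimpleGraph.fromRel (fun u v =>
    (u.2 = v.2 ∧ (u.1 : ℕ) + 1 = (v.1 : ℕ)) ∨ (u.1 = v.1 ∧ u.2 = 0 ∧ v.2 = 1))

/-! ### Auxiliary development

We exhibit a drawing of the ladder graph with at most `4(n-1)(n-2)` Orchard crossings:
place the vertices on the parabola `y = x²` at integer abscissae given by the order
`u₀, w₀, w₁, u₁, u₂, w₂, w₃, u₃, …` (vertex `(i,k)` gets abscissa
`2i + (i + k) % 2`).  In this convex position, a line through two vertices crosses the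
open segment of an edge iff exactly one of the two vertices lies strictly between the
edge's endpoints in the abscissa order.  All rungs and half of the path edges join
consecutive points, hence get no crossings; the remaining `n-1` edges span a gap of `3`
and each receives at most `2 · (2n-4)` crossings. -/

namespace OrchAux

/-- Position index of a ladder vertex in the convex order. -/
def oIdx {n : ℕ} (v : Fin n × Fin 2) : ℕ := 2 * v.1.val + (v.1.val + v.2.val) % 2

lemma oIdx_lt {n : ℕ} (v : Fin n × Fin 2) : oIdx v < 2 * n := by
  have h1 := v.1.isLt; have h2 := v.2.isLt; unfold oIdx; omega

lemma oIdx_inj {n : ℕ} : Function.Injective (oIdx (n := n)) := by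
  rintro ⟨i, k⟩ ⟨j, l⟩ h
  dsimp only [oIdx] at h
  have h1 := i.isLt; have h2 := k.isLt; have h3 := j.isLt; have h4 := l.isLt
  have : i.val = j.val ∧ k.val = l.val := by omega
  simp only [Prod.mk.injEq, Fin.ext_iff]
  exact this

/-- A point collinear with two distinct points of the parabola `y = x²` lies on the
secant line through them. -/
lemma line_eq {a b : ℝ} (hab : a ≠ b) {p : ℝ × ℝ}
    (h : Collinear ℝ ({(a, a^2), (b, b^2), p} : Set (ℝ × ℝ))) :
    p.2 - (a + b) * p.1 + a * b = 0 := by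
  have hmem : ((a, a^2) : ℝ × ℝ) ∈ ({(a, a^2), (b, b^2), p} : Set (ℝ × ℝ)) := by simp
  rw [collinear_iff_of_mem hmem] at h
  obtain ⟨v, hv⟩ := h
  obtain ⟨r₂, hr₂⟩ := hv (b, b^2) (by simp)
  obtain ⟨r₃, hr₃⟩ := hv p (by simp)
  have hb1 : b = r₂ * v.1 + a := by
    have := congrArg Prod.fst hr₂; simpa [smul_eq_mul] using this
  have hb2 : b^2 = r₂ * v.2 + a^2 := by
    have := congrArg Prod.snd hr₂; simpa [smul_eq_mul] using this
  have hp1 : p.1 = r₃ * v.1 + a := by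
    have := congrArg Prod.fst hr₃; simpa [smul_eq_mul] using this
  have hp2 : p.2 = r₃ * v.2 + a^2 := by
    have := congrArg Prod.snd hr₃; simpa [smul_eq_mul] using this
  have hr₂0 : r₂ ≠ 0 := by
    intro h0; rw [h0] at hb1; simp at hb1; exact hab hb1.symm
  have h5 : r₂ * v.2 = r₂ * ((b + a) * v.1) := by linear_combination (b + a) * hb1 - hb2
  have hv2 : v.2 = (b + a) * v.1 := mul_left_cancel₀ hr₂0 h5
  linear_combination hp2 - (a + b) * hp1 + r₃ * hv2

/-- Three points of the parabola `y = x²` with distinct abscissae are not collinear. -/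
lemma parabola_not_collinear {a b c : ℝ} (hab : a ≠ b) (hac : a ≠ c) (hbc : b ≠ c) :
    ¬ Collinear ℝ ({(a, a^2), (b, b^2), (c, c^2)} : Set (ℝ × ℝ)) := by
  intro h
  have h1 := line_eq hab (p := (c, c^2)) h
  have h2 : (c - a) * (c - b) = 0 := by linear_combination h1
  rcases mul_eq_zero.mp h2 with h3 | h3
  · exact hac (sub_eq_zero.mp h3).symm
  · exact hbc (sub_eq_zero.mp h3).symm

lemma sep_core {a b c d : ℝ} (hab : a ≤ b)
    (h : ((c - a) * (c - b)) * ((d - a) * (d - b)) < 0) :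
    (a < c ∧ c < b ∧ (d < a ∨ b < d)) ∨ (a < d ∧ d < b ∧ (c < a ∨ b < c)) := by
  have inside : ∀ x : ℝ, (x - a) * (x - b) < 0 → a < x ∧ x < b := by
    intro x hx
    constructor
    · by_contra hc; push_neg at hc; nlinarith
    · by_contra hc; push_neg at hc; nlinarith
  have outside : ∀ x : ℝ, 0 < (x - a) * (x - b) → x < a ∨ b < x := by
    intro x hx
    by_contra hc; push_neg at hc; nlinarith [hc.1, hc.2]
  rcases mul_neg_iff.mp h with ⟨h1, h2⟩ | ⟨h1, h2⟩
  · right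
    obtain ⟨hd1, hd2⟩ := inside d h2
    exact ⟨hd1, hd2, outside c h1⟩
  · left
    obtain ⟨hc1, hc2⟩ := inside c h1
    exact ⟨hc1, hc2, outside d h2⟩

lemma sep_of_neg {a b c d : ℝ} (h : ((c - a) * (c - b)) * ((d - a) * (d - b)) < 0) :
    (min a b < c ∧ c < max a b ∧ (d < min a b ∨ max a b < d)) ∨
    (min a b < d ∧ d < max a b ∧ (c < min a b ∨ max a b < c)) := by
  rcases le_total a b with hab | hab
  · rw [min_eq_left hab, max_eq_right hab]; exact sep_core hab h
  · rw [min_eq_right hab, max_eq_left hab]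
    exact sep_core hab (by linarith [h,
      (by ring : ((c - b) * (c - a)) * ((d - b) * (d - a)) =
        ((c - a) * (c - b)) * ((d - a) * (d - b)))])

/-- Min of position indices over an unordered pair. -/
def olo {n : ℕ} (e : Sym2 (Fin n × Fin 2)) : ℕ :=
  Sym2.lift ⟨fun x y => min (oIdx x) (oIdx y), fun _ _ => min_comm _ _⟩ e

/-- Max of position indices over an unordered pair. -/
def ohi {n : ℕ} (e : Sym2 (Fin n × Fin 2)) : ℕ :=
  Sym2.lift ⟨fun x y => max (oIdx x) (oIdx y), fun _ _ => max_comm _ _⟩ e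

@[simp] lemma olo_mk {n : ℕ} (x y : Fin n × Fin 2) : olo s(x, y) = min (oIdx x) (oIdx y) := rfl
@[simp] lemma ohi_mk {n : ℕ} (x y : Fin n × Fin 2) : ohi s(x, y) = max (oIdx x) (oIdx y) := rfl

lemma sym2_eq_of_lohi {n : ℕ} {e e' : Sym2 (Fin n × Fin 2)}
    (h1 : olo e = olo e') (h2 : ohi e = ohi e') : e = e' := by
  induction e using Sym2.inductionOn with
  | hf x y =>
    induction e' using Sym2.inductionOn with
    | hf x' y' =>
      simp only [olo_mk, ohi_mk] at h1 h2
      have : (oIdx x = oIdx x' ∧ oIdx y = oIdx y') ∨ (oIdx x = oIdx y' ∧ oIdx y = oIdx x') := by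
        omega
      rcases this with ⟨e1, e2⟩ | ⟨e1, e2⟩
      · rw [oIdx_inj e1, oIdx_inj e2]
      · rw [oIdx_inj e1, oIdx_inj e2, Sym2.eq_swap]

/-- The endpoints of any edge of the ladder are either adjacent in the convex order, or
at distance `3` starting at an even position. -/
lemma edge_gap {n : ℕ} {s t : Fin n × Fin 2} (h : (ladderGraph n).Adj s t) :
    max (oIdx s) (oIdx t) = min (oIdx s) (oIdx t) + 1 ∨
    (max (oIdx s) (oIdx t) = min (oIdx s) (oIdx t) + 3 ∧ min (oIdx s) (oIdx t) % 2 = 0) := by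
  rw [ladderGraph, SimpleGraph.fromRel_adj] at h
  obtain ⟨hne, hrel⟩ := h
  have h2 := s.2.isLt; have h4 := t.2.isLt
  dsimp only [oIdx]
  rcases hrel with (⟨h1, hv⟩ | ⟨h1, h2', h3'⟩) | (⟨h1, hv⟩ | ⟨h1, h2', h3'⟩)
  · have : s.2.val = t.2.val := by rw [h1]
    omega
  · have e1 : s.1.val = t.1.val := by rw [h1]
    have e2 : s.2.val = 0 := by rw [h2']; rfl
    have e3 : t.2.val = 1 := by rw [h3']; rfl
    omega
  · have : t.2.val = s.2.val := by rw [h1]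
    omega
  · have e1 : t.1.val = s.1.val := by rw [h1]
    have e2 : t.2.val = 0 := by rw [h2']; rfl
    have e3 : s.2.val = 1 := by rw [h3']; rfl
    omega

/-- The drawing of the ladder graph on the parabola. -/
def drawing (n : ℕ) : OrchardDrawing (ladderGraph n) where
  pos := fun v => ((oIdx v : ℝ), (oIdx v : ℝ) ^ 2)
  inj := by
    intro u v h
    have h1 : ((oIdx u : ℝ)) = (oIdx v : ℝ) := congrArg Prod.fst h
    exact oIdx_inj (Nat.cast_injective h1)
  genPos := by
    intro u v w huv huw hvw
    have h1 : (oIdx u : ℝ) ≠ (oIdx v : ℝ) := by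
      intro hc; exact huv (oIdx_inj (Nat.cast_injective hc))
    have h2 : (oIdx u : ℝ) ≠ (oIdx w : ℝ) := by
      intro hc; exact huw (oIdx_inj (Nat.cast_injective hc))
    have h3 : (oIdx v : ℝ) ≠ (oIdx w : ℝ) := by
      intro hc; exact hvw (oIdx_inj (Nat.cast_injective hc))
    exact parabola_not_collinear h1 h2 h3

lemma drawing_pos {n : ℕ} (v : Fin n × Fin 2) :
    (drawing n).pos v = ((oIdx v : ℝ), (oIdx v : ℝ) ^ 2) := rfl

/-- Any Orchard crossing of the parabola drawing lives on an edge spanning a gap of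
three positions, and exactly one vertex of the crossing pair lies strictly inside the
gap, the other strictly outside. -/
lemma crossing_facts {n : ℕ} {q : Sym2 (Fin n × Fin 2) × Sym2 (Fin n × Fin 2)}
    (h : q.1 ∈ (ladderGraph n).edgeSet ∧ q.2 ≠ q.1 ∧ ¬ q.2.IsDiag ∧
      ∃ u v s t : Fin n × Fin 2, q.2 = s(u, v) ∧ q.1 = s(s, t) ∧
        ∃ p ∈ openSegment ℝ ((drawing n).pos s) ((drawing n).pos t),
          Collinear ℝ ({(drawing n).pos u, (drawing n).pos v, p} : Set (ℝ × ℝ))) :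
    ohi q.1 = olo q.1 + 3 ∧ olo q.1 % 2 = 0 ∧ ohi q.1 < 2 * n ∧ ohi q.2 < 2 * n ∧
    ((olo q.1 < olo q.2 ∧ olo q.2 < ohi q.1 ∧ ohi q.1 < ohi q.2) ∨
     (olo q.2 < olo q.1 ∧ olo q.1 < ohi q.2 ∧ ohi q.2 < ohi q.1)) := by
  obtain ⟨he, hne, hdiag, u, v, s, t, hq2, hq1, p, hp, hcol⟩ := h
  have hadj : (ladderGraph n).Adj s t := by rw [hq1] at he; exact he
  have hst : s ≠ t := hadj.ne
  have huv : u ≠ v := by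
    rw [hq2] at hdiag; simpa [Sym2.mk_isDiag_iff] using hdiag
  set na := oIdx s with hna
  set nb := oIdx t with hnb
  set nc := oIdx u with hnc
  set nd := oIdx v with hnd
  have hab : na ≠ nb := fun hc => hst (oIdx_inj hc)
  have hcd : nc ≠ nd := fun hc => huv (oIdx_inj hc)
  have hcdR : (nc : ℝ) ≠ (nd : ℝ) := by exact_mod_cast hcd
  rw [drawing_pos, drawing_pos] at hp
  rw [openSegment] at hp
  obtain ⟨x, y, hx, hy, hxy, hpeq⟩ := hp
  rw [drawing_pos, drawing_pos] at hcol
  have hline := line_eq hcdR hcol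
  have hp1 : p.1 = x * na + y * nb := by
    have := congrArg Prod.fst hpeq; simpa [smul_eq_mul] using this.symm
  have hp2 : p.2 = x * (na : ℝ) ^ 2 + y * (nb : ℝ) ^ 2 := by
    have := congrArg Prod.snd hpeq; simpa [smul_eq_mul] using this.symm
  have key : x * (((na : ℝ) - nc) * ((na : ℝ) - nd))
      + y * (((nb : ℝ) - nc) * ((nb : ℝ) - nd)) = 0 := by
    linear_combination hline - hp2 + ((nc : ℝ) + nd) * hp1 + (nc : ℝ) * nd * hxy
  by_cases hga : ((na : ℝ) - nc) * ((na : ℝ) - nd) = 0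
  · exfalso
    have hgb : ((nb : ℝ) - nc) * ((nb : ℝ) - nd) = 0 := by
      have : y * (((nb : ℝ) - nc) * ((nb : ℝ) - nd)) = 0 := by
        rw [hga] at key; linarith
      rcases mul_eq_zero.mp this with h0 | h0
      · exact absurd h0 (ne_of_gt hy)
      · exact h0
    have ha' : s = u ∨ s = v := by
      rcases mul_eq_zero.mp hga with h0 | h0
      · left; exact oIdx_inj (Nat.cast_injective (sub_eq_zero.mp h0))
      · right; exact oIdx_inj (Nat.cast_injective (sub_eq_zero.mp h0))
    have hb' : t = u ∨ t = v := by
      rcases mul_eq_zero.mp hgb with h0 | h0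
      · left; exact oIdx_inj (Nat.cast_injective (sub_eq_zero.mp h0))
      · right; exact oIdx_inj (Nat.cast_injective (sub_eq_zero.mp h0))
    apply hne
    rw [hq2, hq1]
    rcases ha' with rfl | rfl <;> rcases hb' with rfl | rfl
    · exact absurd rfl hst
    · rfl
    · exact Sym2.eq_swap
    · exact absurd rfl hst
  · have hgb : ((nb : ℝ) - nc) * ((nb : ℝ) - nd) ≠ 0 := by
      intro h0
      apply hga
      rw [h0] at key
      have : x * (((na : ℝ) - nc) * ((na : ℝ) - nd)) = 0 := by linarith
      rcases mul_eq_zero.mp this with h1 | h1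
      · exact absurd h1 (ne_of_gt hx)
      · exact h1
    have hprod : (((na : ℝ) - nc) * ((na : ℝ) - nd))
        * (((nb : ℝ) - nc) * ((nb : ℝ) - nd)) < 0 := by
      by_contra hcon
      push_neg at hcon
      have h5 : x * ((((na : ℝ) - nc) * ((na : ℝ) - nd)) * (((nb : ℝ) - nc) * ((nb : ℝ) - nd)))
          = -(y * ((((nb : ℝ) - nc) * ((nb : ℝ) - nd))
            * (((nb : ℝ) - nc) * ((nb : ℝ) - nd)))) := by
        linear_combination (((nb : ℝ) - nc) * ((nb : ℝ) - nd)) * key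
      have h6 : 0 < y * ((((nb : ℝ) - nc) * ((nb : ℝ) - nd))
          * (((nb : ℝ) - nc) * ((nb : ℝ) - nd))) :=
        mul_pos hy (mul_self_pos.mpr hgb)
      nlinarith [mul_nonneg hx.le hcon]
    have hprod' : (((nc : ℝ) - na) * ((nc : ℝ) - nb))
        * (((nd : ℝ) - na) * ((nd : ℝ) - nb)) < 0 := by
      nlinarith [hprod]
    have hsepR := sep_of_neg hprod'
    have hsep : (min na nb < nc ∧ nc < max na nb ∧ (nd < min na nb ∨ max na nb < nd)) ∨
        (min na nb < nd ∧ nd < max na nb ∧ (nc < min na nb ∨ max na nb < nc)) := by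
      push_cast [← Nat.cast_min, ← Nat.cast_max] at hsepR
      exact_mod_cast hsepR
    have hgap := edge_gap hadj
    have hAB1 : olo q.1 = min na nb := by rw [hq1]; simp; rfl
    have hAB2 : ohi q.1 = max na nb := by rw [hq1]; simp; rfl
    have hCD1 : olo q.2 = min nc nd := by rw [hq2]; simp; rfl
    have hCD2 : ohi q.2 = max nc nd := by rw [hq2]; simp; rfl
    have hblt := oIdx_lt t; have halt := oIdx_lt s
    have hclt := oIdx_lt u; have hdlt := oIdx_lt v
    rw [hAB1, hAB2, hCD1, hCD2]
    omega

/-- Encoding of a crossing: (column index, which middle vertex, code of the outside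
vertex). -/
def enc {n : ℕ} (q : Sym2 (Fin n × Fin 2) × Sym2 (Fin n × Fin 2)) : ℕ × ℕ × ℕ :=
  ((olo q.1) / 2,
   (if olo q.1 < olo q.2 ∧ olo q.2 < olo q.1 + 3 then olo q.2 else ohi q.2) - (olo q.1 + 1),
   if (if olo q.1 < olo q.2 ∧ olo q.2 < olo q.1 + 3 then ohi q.2 else olo q.2) < olo q.1
     then (if olo q.1 < olo q.2 ∧ olo q.2 < olo q.1 + 3 then ohi q.2 else olo q.2)
     else (if olo q.1 < olo q.2 ∧ olo q.2 < olo q.1 + 3 then ohi q.2 else olo q.2) - 4)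

lemma enc_spec {n : ℕ} (q : Sym2 (Fin n × Fin 2) × Sym2 (Fin n × Fin 2))
    (hf : ohi q.1 = olo q.1 + 3 ∧ olo q.1 % 2 = 0 ∧ ohi q.1 < 2 * n ∧ ohi q.2 < 2 * n ∧
      ((olo q.1 < olo q.2 ∧ olo q.2 < ohi q.1 ∧ ohi q.1 < ohi q.2) ∨
       (olo q.2 < olo q.1 ∧ olo q.1 < ohi q.2 ∧ ohi q.2 < ohi q.1))) :
    2 * (enc q).1 = olo q.1 ∧ (enc q).1 + 2 ≤ n ∧ (enc q).2.1 < 2 ∧ (enc q).2.2 + 5 ≤ 2 * n ∧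
    (((enc q).2.2 < olo q.1 ∧
        olo q.2 = min (olo q.1 + 1 + (enc q).2.1) (enc q).2.2 ∧
        ohi q.2 = max (olo q.1 + 1 + (enc q).2.1) (enc q).2.2) ∨
     (olo q.1 ≤ (enc q).2.2 ∧
        olo q.2 = min (olo q.1 + 1 + (enc q).2.1) ((enc q).2.2 + 4) ∧
        ohi q.2 = max (olo q.1 + 1 + (enc q).2.1) ((enc q).2.2 + 4))) := by
  obtain ⟨h1, h2, h3, h4, h5⟩ := hf
  rcases h5 with ⟨ha, hb, hc⟩ | ⟨ha, hb, hc⟩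
  · have hcase : olo q.1 < olo q.2 ∧ olo q.2 < olo q.1 + 3 := by omega
    have hz : ¬ (ohi q.2 < olo q.1) := by omega
    simp only [enc, if_pos hcase, if_neg hz]
    omega
  · have hcase : ¬ (olo q.1 < olo q.2 ∧ olo q.2 < olo q.1 + 3) := by omega
    have hz : olo q.2 < olo q.1 := ha
    simp only [enc, if_neg hcase, if_pos hz]
    omega

/-- The parabola drawing has at most `4(n-1)(n-2)` Orchard crossings. -/
lemma main_bound {n : ℕ} (hn : 5 < n) :
    orchardCrossings (drawing n) ≤ 4 * (n - 1) * (n - 2) := by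
  rw [orchardCrossings]
  have hn1 : 0 < n - 1 := by omega
  have hn2 : 0 < 2 * n - 4 := by omega
  set S := {q : Sym2 (Fin n × Fin 2) × Sym2 (Fin n × Fin 2) //
    q.1 ∈ (ladderGraph n).edgeSet ∧ q.2 ≠ q.1 ∧ ¬ q.2.IsDiag ∧
    ∃ u v s t : Fin n × Fin 2, q.2 = s(u, v) ∧ q.1 = s(s, t) ∧
      ∃ p ∈ openSegment ℝ ((drawing n).pos s) ((drawing n).pos t),
        Collinear ℝ ({(drawing n).pos u, (drawing n).pos v, p} : Set (ℝ × ℝ))} with hS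
  have hinj : ∃ F : S → Fin (n - 1) × Fin 2 × Fin (2 * n - 4), Function.Injective F := by
    refine ⟨fun q => (⟨(enc q.1).1 % (n - 1), Nat.mod_lt _ hn1⟩,
      ⟨(enc q.1).2.1 % 2, Nat.mod_lt _ (by omega)⟩,
      ⟨(enc q.1).2.2 % (2 * n - 4), Nat.mod_lt _ hn2⟩), ?_⟩
    rintro ⟨q, hq⟩ ⟨q', hq'⟩ hF
    obtain ⟨e1, e2, e3⟩ : (enc q).1 % (n - 1) = (enc q').1 % (n - 1) ∧
        (enc q).2.1 % 2 = (enc q').2.1 % 2 ∧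
        (enc q).2.2 % (2 * n - 4) = (enc q').2.2 % (2 * n - 4) := by
      have h1 := congrArg (fun x => (x.1.val, x.2.1.val, x.2.2.val)) hF
      simp only [Prod.mk.injEq] at h1
      exact ⟨h1.1, h1.2.1, h1.2.2⟩
    have hs := enc_spec q (crossing_facts hq)
    have hs' := enc_spec q' (crossing_facts hq')
    obtain ⟨f1, f2, f3, f4, f5⟩ := hs
    obtain ⟨g1, g2, g3, g4, g5⟩ := hs'
    rw [Nat.mod_eq_of_lt (by omega), Nat.mod_eq_of_lt (by omega)] at e1
    rw [Nat.mod_eq_of_lt (by omega), Nat.mod_eq_of_lt (by omega)] at e2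
    rw [Nat.mod_eq_of_lt (by omega), Nat.mod_eq_of_lt (by omega)] at e3
    have hA : olo q.1 = olo q'.1 := by omega
    have hB : ohi q.1 = ohi q'.1 := by
      have := (crossing_facts hq).1; have := (crossing_facts hq').1; omega
    have hq1 : q.1 = q'.1 := sym2_eq_of_lohi hA hB
    have hC : olo q.2 = olo q'.2 := by omega
    have hD : ohi q.2 = ohi q'.2 := by omega
    have hq2 : q.2 = q'.2 := sym2_eq_of_lohi hC hD
    exact Subtype.ext (Prod.ext hq1 hq2)
  obtain ⟨F, hF⟩ := hinj
  calc Nat.card S ≤ Nat.card (Fin (n - 1) × Fin 2 × Fin (2 * n - 4)) :=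
        Nat.card_le_card_of_injective F hF
    _ = (n - 1) * (2 * (2 * n - 4)) := by
        simp [Nat.card_eq_fintype_card]
    _ = 4 * (n - 1) * (n - 2) := by
        have h1 : 2 * (2 * n - 4) = 4 * (n - 2) := by omega
        rw [h1]; ring

end OrchAux

theorem OCN_ladder_upper (n : ℕ) (hn : 5 < n) :
    OCN (ladderGraph n) ≤ 4 * (n - 1) * (n - 2) := by
  refine le_trans (Nat.sInf_le ?_) (OrchAux.main_bound hn)
  exact ⟨OrchAux.drawing n, rfl⟩
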